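/- For natural numbers 0 < k < n, the number d of maximal chains of the poset P_{k,n} satisfies n · d = (n−k) · \binom{n+k−1}{k}; that is, the number of maximal chains equals the ballot number counting monotone lattice paths from (0,0) to (k,n−1) that stay weakly below the diagonal (first coordinate ≤ second coordinate). -/

import Mathlib

/-- The poset `P_{k,n}`: pairs `(l,m)` of naturals with `l ≤ k` and `l < m ≤ n`,
ordered componentwise (which is the product order on `ℕ × ℕ`). -/
def Pkn (k n : ℕ) : Set (ℕ × ℕ) := {q | q.1 ≤ k ∧ q.1 < q.2 ∧ q.2 ≤ n}

/-- `C` is a maximal chain of the subposet of `ℕ × ℕ` (with the componentwise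
order) on the set `V`: a chain contained in `V` not properly contained in any
chain contained in `V`. -/
def IsMaxChainIn (V C : Set (ℕ × ℕ)) : Prop :=
  C ⊆ V ∧ IsChain (· ≤ ·) C ∧
    ∀ C', C' ⊆ V → IsChain (· ≤ ·) C' → C ⊆ C' → C' = C

namespace PknAux

/-- Ballot numbers: paths from `(0,0)` to `(a,b)` staying weakly below diagonal. -/
def bal : ℕ → ℕ → ℕ
  | 0, _ => 1
  | _+1, 0 => 0
  | a+1, b+1 => if a ≤ b then bal a (b+1) + bal (a+1) b else 0
termination_by a b => a + b
decreasing_by all_goals omega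

lemma bal_zero (b : ℕ) : bal 0 b = 1 := by
  cases b <;> simp [bal]

lemma bal_high {a b : ℕ} (h : b < a) : bal a b = 0 := by
  match a, b with
  | a+1, 0 => simp [bal]
  | a+1, b+1 => rw [bal]; simp; omega

lemma bal_succ {a b : ℕ} (h : a ≤ b) : bal (a+1) (b+1) = bal a (b+1) + bal (a+1) b := by
  rw [bal]; simp [h]

lemma bal_one (b : ℕ) : bal 1 b = b := by
  induction b with
  | zero => simp [bal]
  | succ b ih => rw [bal_succ (Nat.zero_le b), bal_zero, ih]; omega

lemma bal_eq : ∀ s a b, a + b ≤ s → 1 ≤ a → a ≤ b →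
    bal a b + (a + b).choose (a - 1) = (a + b).choose a := by
  intro s
  induction s with
  | zero => intro a b h ha hab; omega
  | succ s IH =>
    intro a b hfuel ha hab
    rcases eq_or_lt_of_le ha with h1 | h2
    · obtain rfl : a = 1 := h1.symm
      rw [bal_one, show (1:ℕ) - 1 = 0 from rfl, Nat.choose_zero_right, Nat.choose_one_right]
      omega
    · obtain ⟨a'', rfl⟩ : ∃ a'', a = a'' + 2 := ⟨a - 2, by omega⟩
      obtain ⟨b'', rfl⟩ : ∃ b'', b = b'' + 1 := ⟨b - 1, by omega⟩
      have hab' : a'' + 1 ≤ b'' := by omega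
      have hrec := bal_succ (show a'' + 1 ≤ b'' by omega)
      rcases eq_or_lt_of_le hab' with hdiag | hoff
      · subst hdiag
        have hz : bal (a''+2) (a''+1) = 0 := bal_high (by omega)
        have h1 := IH (a''+1) (a''+2) (by omega) (by omega) (by omega)
        rw [show a''+1-1 = a'' from rfl] at h1
        have p1 := Nat.choose_succ_succ (2*a''+3) (a''+1)
        have p2 := Nat.choose_succ_succ (2*a''+3) a''
        have hsym := Nat.choose_symm_half (a''+1)
        rw [show a''+2-1 = a''+1 from rfl]
        simp only [Nat.succ_eq_add_one] at hrec hz h1 p1 p2 hsym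
        ring_nf at hrec hz h1 p1 p2 hsym ⊢
        omega
      · have h1 := IH (a''+1) (b''+1) (by omega) (by omega) (by omega)
        have h2 := IH (a''+2) b'' (by omega) (by omega) (by omega)
        rw [show a''+1-1 = a'' from rfl] at h1
        rw [show a''+2-1 = a''+1 from rfl] at h2
        have p1 := Nat.choose_succ_succ (a''+b''+2) (a''+1)
        have p2 := Nat.choose_succ_succ (a''+b''+2) a''
        rw [show a''+2-1 = a''+1 from rfl]
        simp only [Nat.succ_eq_add_one] at hrec h1 h2 p1 p2
        ring_nf at hrec h1 h2 p1 p2 ⊢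
        omega

/- ## Finiteness -/

lemma finite_Pkn (a b : ℕ) : (Pkn a b).Finite := by
  apply Set.Finite.subset (Set.finite_Iic ((a : ℕ), b))
  rintro ⟨l, m⟩ h
  simp only [Pkn, Set.mem_setOf_eq] at h
  exact Set.mem_Iic.2 (Prod.mk_le_mk.2 ⟨by omega, by omega⟩)

lemma MC_finite (a b : ℕ) : {C : Set (ℕ × ℕ) | IsMaxChainIn (Pkn a b) C}.Finite :=
  Set.Finite.subset (Set.Finite.finite_subsets (finite_Pkn a b)) (fun _ hC => hC.1)

/- ## Structure of maximal chains -/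

lemma mem_bot_top {a b : ℕ} (hab : a < b) {C : Set (ℕ × ℕ)}
    (hC : IsMaxChainIn (Pkn a b) C) : ((0 : ℕ), (1 : ℕ)) ∈ C ∧ ((a : ℕ), b) ∈ C := by
  obtain ⟨hsub, hch, hmax⟩ := hC
  have hbot : ∀ q ∈ Pkn a b, ((0 : ℕ), (1 : ℕ)) ≤ q := by
    rintro ⟨l, m⟩ hq
    simp only [Pkn, Set.mem_setOf_eq] at hq
    exact Prod.mk_le_mk.2 ⟨by omega, by omega⟩
  have htop : ∀ q ∈ Pkn a b, q ≤ ((a : ℕ), b) := by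
    rintro ⟨l, m⟩ hq
    simp only [Pkn, Set.mem_setOf_eq] at hq
    exact Prod.mk_le_mk.2 ⟨by omega, by omega⟩
  have hbm : ((0 : ℕ), (1 : ℕ)) ∈ Pkn a b := by
    simp only [Pkn, Set.mem_setOf_eq]; omega
  have htm : ((a : ℕ), b) ∈ Pkn a b := by
    simp only [Pkn, Set.mem_setOf_eq]; omega
  have hch2 : IsChain (· ≤ ·) (insert ((0 : ℕ), (1 : ℕ)) (insert ((a : ℕ), b) C)) := by
    apply IsChain.insert
    · exact hch.insert (fun c hc _ => Or.inr (htop c (hsub hc)))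
    · rintro c hc _
      rcases Set.mem_insert_iff.1 hc with rfl | h
      · exact Or.inl (hbot _ htm)
      · exact Or.inl (hbot _ (hsub h))
  have hsub2 : insert ((0 : ℕ), (1 : ℕ)) (insert ((a : ℕ), b) C) ⊆ Pkn a b := by
    rintro c hc
    rcases Set.mem_insert_iff.1 hc with rfl | hc
    · exact hbm
    · rcases Set.mem_insert_iff.1 hc with rfl | hc
      · exact htm
      · exact hsub hc
  have heq := hmax _ hsub2 hch2
    (fun c hc => Set.mem_insert_of_mem _ (Set.mem_insert_of_mem _ hc))
  constructor
  · rw [← heq]; exact Set.mem_insert _ _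
  · rw [← heq]; exact Set.mem_insert_of_mem _ (Set.mem_insert _ _)

lemma dense_lemma {a b : ℕ} {x y : ℕ × ℕ} (hx : x ∈ Pkn a b) (hy : y ∈ Pkn a b)
    (hxy : x ≤ y) (hs : x.1 + x.2 + 2 ≤ y.1 + y.2) :
    ∃ z ∈ Pkn a b, x ≤ z ∧ z ≠ x ∧ z ≤ y ∧ z ≠ y := by
  obtain ⟨l, m⟩ := x; obtain ⟨l', m'⟩ := y
  simp only [Pkn, Set.mem_setOf_eq] at hx hy
  obtain ⟨h1, h2⟩ := Prod.mk_le_mk.1 hxy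
  simp only at hs
  by_cases hm : m < m'
  · refine ⟨(l, m+1), ?_, Prod.mk_le_mk.2 ⟨le_refl _, by omega⟩, ?_,
      Prod.mk_le_mk.2 ⟨h1, by omega⟩, ?_⟩
    · simp only [Pkn, Set.mem_setOf_eq]; omega
    · simp only [ne_eq, Prod.mk.injEq]; omega
    · simp only [ne_eq, Prod.mk.injEq]; omega
  · refine ⟨(l+1, m), ?_, Prod.mk_le_mk.2 ⟨by omega, le_refl _⟩, ?_,
      Prod.mk_le_mk.2 ⟨by omega, by omega⟩, ?_⟩
    · simp only [Pkn, Set.mem_setOf_eq]; omega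
    · simp only [ne_eq, Prod.mk.injEq]; omega
    · simp only [ne_eq, Prod.mk.injEq]; omega

lemma penult {a b : ℕ} (ha : 1 ≤ a) (hab : a < b) {C : Set (ℕ × ℕ)}
    (hC : IsMaxChainIn (Pkn a b) C) :
    (((a - 1 : ℕ), b) ∈ C ∧ ∀ c ∈ C, c ≠ ((a : ℕ), b) → c ≤ ((a - 1 : ℕ), b)) ∨
    (((a : ℕ), (b - 1 : ℕ)) ∈ C ∧ ∀ c ∈ C, c ≠ ((a : ℕ), b) → c ≤ ((a : ℕ), (b - 1 : ℕ))) := by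
  obtain ⟨h01, habC⟩ := mem_bot_top hab hC
  obtain ⟨hsub, hch, hmax⟩ := hC
  have hfin : (C \ {((a : ℕ), b)}).Finite := ((finite_Pkn a b).subset hsub).diff
  have hne : (C \ {((a : ℕ), b)}).Nonempty := by
    refine ⟨(0, 1), h01, ?_⟩
    simp only [Set.mem_singleton_iff, Prod.mk.injEq, not_and]
    omega
  obtain ⟨x, hxmem, hxmax⟩ := Set.Finite.exists_maximalFor id _ hfin hne
  have hxC : x ∈ C := hxmem.1
  have hxne : x ≠ ((a : ℕ), b) := hxmem.2
  have hgr : ∀ c ∈ C, c ≠ ((a : ℕ), b) → c ≤ x := by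
    intro c hc hcne
    rcases hch.total hxC hc with h | h
    · exact hxmax ⟨hc, hcne⟩ h
    · exact h
  have hxP := hsub hxC
  have hdisj : x = ((a - 1 : ℕ), b) ∨ x = ((a : ℕ), (b - 1 : ℕ)) := by
    by_contra hcon
    push_neg at hcon
    obtain ⟨hne1, hne2⟩ := hcon
    have htopP : ((a : ℕ), b) ∈ Pkn a b := by
      simp only [Pkn, Set.mem_setOf_eq]; omega
    have hxle : x ≤ ((a : ℕ), b) := by
      obtain ⟨l, m⟩ := x
      simp only [Pkn, Set.mem_setOf_eq] at hxP
      exact Prod.mk_le_mk.2 ⟨by omega, by omega⟩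
    have hsum : x.1 + x.2 + 2 ≤ ((a : ℕ), b).1 + ((a : ℕ), b).2 := by
      obtain ⟨l, m⟩ := x
      simp only [Pkn, Set.mem_setOf_eq] at hxP
      simp only [ne_eq, Prod.mk.injEq, not_and] at hxne hne1 hne2
      simp only
      omega
    obtain ⟨z, hzP, hxz, hzx, hzt, hzt2⟩ := dense_lemma hxP htopP hxle hsum
    have hznC : z ∉ C := by
      intro hzC
      exact hzx (le_antisymm (hgr z hzC hzt2) hxz)
    have hchz : IsChain (· ≤ ·) (insert z C) := by
      apply hch.insert
      intro c hc hne'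
      rcases eq_or_ne c ((a : ℕ), b) with rfl | hcne
      · exact Or.inl hzt
      · exact Or.inr (le_trans (hgr c hc hcne) hxz)
    have hsubz : insert z C ⊆ Pkn a b := by
      rintro c hc
      rcases Set.mem_insert_iff.1 hc with rfl | hc
      · exact hzP
      · exact hsub hc
    have := hmax _ hsubz hchz (Set.subset_insert _ _)
    exact hznC (this ▸ Set.mem_insert z C)
  rcases hdisj with rfl | rfl
  · exact Or.inl ⟨hxC, hgr⟩
  · exact Or.inr ⟨hxC, hgr⟩

lemma removeA {a b : ℕ} (ha : 1 ≤ a) (hab : a < b) {C : Set (ℕ × ℕ)}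
    (hC : IsMaxChainIn (Pkn a b) C)
    (hgr : ∀ c ∈ C, c ≠ ((a : ℕ), b) → c ≤ ((a - 1 : ℕ), b)) :
    IsMaxChainIn (Pkn (a - 1) b) (C \ {((a : ℕ), b)}) := by
  obtain ⟨h01, habC⟩ := mem_bot_top hab hC
  obtain ⟨hsub, hch, hmax⟩ := hC
  refine ⟨?_, hch.mono Set.diff_subset, ?_⟩
  · rintro c ⟨hc, hcne⟩
    have h1 := hgr c hc hcne
    have h2 := hsub hc
    obtain ⟨l, m⟩ := c
    obtain ⟨e1, e2⟩ := Prod.mk_le_mk.1 h1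
    simp only [Pkn, Set.mem_setOf_eq] at h2 ⊢
    omega
  · intro C'' hsub'' hch'' hss
    have htopnot : ((a : ℕ), b) ∉ C'' := by
      intro h
      have := hsub'' h
      simp only [Pkn, Set.mem_setOf_eq] at this
      omega
    have hD : insert ((a : ℕ), b) C'' ⊆ Pkn a b := by
      rintro c hc
      rcases Set.mem_insert_iff.1 hc with rfl | hc
      · simp only [Pkn, Set.mem_setOf_eq]; omega
      · have := hsub'' hc
        obtain ⟨l, m⟩ := c
        simp only [Pkn, Set.mem_setOf_eq] at this ⊢
        omega
    have hDch : IsChain (· ≤ ·) (insert ((a : ℕ), b) C'') := by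
      apply hch''.insert
      intro c hc _
      have := hsub'' hc
      obtain ⟨l, m⟩ := c
      simp only [Pkn, Set.mem_setOf_eq] at this
      exact Or.inr (Prod.mk_le_mk.2 ⟨by omega, by omega⟩)
    have hCD : C ⊆ insert ((a : ℕ), b) C'' := by
      intro c hc
      rcases eq_or_ne c ((a : ℕ), b) with rfl | hne
      · exact Set.mem_insert _ _
      · exact Set.mem_insert_of_mem _ (hss ⟨hc, hne⟩)
    have hDC := hmax _ hD hDch hCD
    apply Set.Subset.antisymm _ hss
    intro c hc
    refine ⟨?_, ?_⟩
    · rw [← hDC]; exact Set.mem_insert_of_mem _ hc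
    · intro h
      rw [Set.mem_singleton_iff] at h
      exact htopnot (h ▸ hc)

lemma removeB {a b : ℕ} (hab : a < b) {C : Set (ℕ × ℕ)}
    (hC : IsMaxChainIn (Pkn a b) C)
    (hgr : ∀ c ∈ C, c ≠ ((a : ℕ), b) → c ≤ ((a : ℕ), (b - 1 : ℕ))) :
    IsMaxChainIn (Pkn a (b - 1)) (C \ {((a : ℕ), b)}) := by
  obtain ⟨h01, habC⟩ := mem_bot_top hab hC
  obtain ⟨hsub, hch, hmax⟩ := hC
  refine ⟨?_, hch.mono Set.diff_subset, ?_⟩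
  · rintro c ⟨hc, hcne⟩
    have h1 := hgr c hc hcne
    have h2 := hsub hc
    obtain ⟨l, m⟩ := c
    obtain ⟨e1, e2⟩ := Prod.mk_le_mk.1 h1
    simp only [Pkn, Set.mem_setOf_eq] at h2 ⊢
    omega
  · intro C'' hsub'' hch'' hss
    have htopnot : ((a : ℕ), b) ∉ C'' := by
      intro h
      have := hsub'' h
      simp only [Pkn, Set.mem_setOf_eq] at this
      omega
    have hD : insert ((a : ℕ), b) C'' ⊆ Pkn a b := by
      rintro c hc
      rcases Set.mem_insert_iff.1 hc with rfl | hc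
      · simp only [Pkn, Set.mem_setOf_eq]; omega
      · have := hsub'' hc
        obtain ⟨l, m⟩ := c
        simp only [Pkn, Set.mem_setOf_eq] at this ⊢
        omega
    have hDch : IsChain (· ≤ ·) (insert ((a : ℕ), b) C'') := by
      apply hch''.insert
      intro c hc _
      have := hsub'' hc
      obtain ⟨l, m⟩ := c
      simp only [Pkn, Set.mem_setOf_eq] at this
      exact Or.inr (Prod.mk_le_mk.2 ⟨by omega, by omega⟩)
    have hCD : C ⊆ insert ((a : ℕ), b) C'' := by
      intro c hc
      rcases eq_or_ne c ((a : ℕ), b) with rfl | hne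
      · exact Set.mem_insert _ _
      · exact Set.mem_insert_of_mem _ (hss ⟨hc, hne⟩)
    have hDC := hmax _ hD hDch hCD
    apply Set.Subset.antisymm _ hss
    intro c hc
    refine ⟨?_, ?_⟩
    · rw [← hDC]; exact Set.mem_insert_of_mem _ hc
    · intro h
      rw [Set.mem_singleton_iff] at h
      exact htopnot (h ▸ hc)

lemma extendA {a b : ℕ} (hab : a + 1 < b) {C' : Set (ℕ × ℕ)}
    (hC' : IsMaxChainIn (Pkn a b) C') :
    IsMaxChainIn (Pkn (a + 1) b) (insert ((a + 1 : ℕ), b) C') := by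
  have htopC' : ((a : ℕ), b) ∈ C' := (mem_bot_top (by omega) hC').2
  obtain ⟨hsub, hch, hmax⟩ := hC'
  have hmono : Pkn a b ⊆ Pkn (a + 1) b := by
    rintro ⟨l, m⟩ h
    simp only [Pkn, Set.mem_setOf_eq] at h ⊢
    omega
  refine ⟨?_, ?_, ?_⟩
  · rintro c hc
    rcases Set.mem_insert_iff.1 hc with rfl | hc
    · simp only [Pkn, Set.mem_setOf_eq]; omega
    · exact hmono (hsub hc)
  · apply hch.insert
    intro c hc _
    have := hsub hc
    obtain ⟨l, m⟩ := c
    simp only [Pkn, Set.mem_setOf_eq] at this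
    exact Or.inr (Prod.mk_le_mk.2 ⟨by omega, by omega⟩)
  · intro C'' hsub'' hch'' hss
    apply Set.Subset.antisymm _ hss
    intro x hx
    rcases eq_or_ne x ((a + 1 : ℕ), b) with rfl | hne
    · exact Set.mem_insert _ _
    have hxP := hsub'' hx
    rcases hch''.total hx (hss (Set.mem_insert_of_mem _ htopC')) with h | h
    · have hD : {y ∈ C'' | y ≤ ((a : ℕ), b)} = C' := by
        apply hmax
        · rintro y ⟨hy, hy2⟩
          have := hsub'' hy
          obtain ⟨l, m⟩ := y
          obtain ⟨e1, e2⟩ := Prod.mk_le_mk.1 hy2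
          simp only [Pkn, Set.mem_setOf_eq] at this ⊢
          omega
        · exact hch''.mono (Set.sep_subset _ _)
        · intro c hc
          refine ⟨hss (Set.mem_insert_of_mem _ hc), ?_⟩
          have := hsub hc
          obtain ⟨l, m⟩ := c
          simp only [Pkn, Set.mem_setOf_eq] at this
          exact Prod.mk_le_mk.2 ⟨by omega, by omega⟩
      have hx' : x ∈ C' := by rw [← hD]; exact ⟨hx, h⟩
      exact Set.mem_insert_of_mem _ hx'
    · obtain ⟨l, m⟩ := x
      obtain ⟨e1, e2⟩ := Prod.mk_le_mk.1 h
      simp only [Pkn, Set.mem_setOf_eq] at hxP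
      simp only [ne_eq, Prod.mk.injEq, not_and] at hne
      have hm : m = b := by omega
      have hl : l = a := by omega
      subst hm; subst hl
      exact Set.mem_insert_of_mem _ htopC'

lemma extendB {a b : ℕ} (hab : a < b) {C' : Set (ℕ × ℕ)}
    (hC' : IsMaxChainIn (Pkn a b) C') :
    IsMaxChainIn (Pkn a (b + 1)) (insert ((a : ℕ), (b + 1 : ℕ)) C') := by
  have htopC' : ((a : ℕ), b) ∈ C' := (mem_bot_top hab hC').2
  obtain ⟨hsub, hch, hmax⟩ := hC'
  have hmono : Pkn a b ⊆ Pkn a (b + 1) := by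
    rintro ⟨l, m⟩ h
    simp only [Pkn, Set.mem_setOf_eq] at h ⊢
    omega
  refine ⟨?_, ?_, ?_⟩
  · rintro c hc
    rcases Set.mem_insert_iff.1 hc with rfl | hc
    · simp only [Pkn, Set.mem_setOf_eq]; omega
    · exact hmono (hsub hc)
  · apply hch.insert
    intro c hc _
    have := hsub hc
    obtain ⟨l, m⟩ := c
    simp only [Pkn, Set.mem_setOf_eq] at this
    exact Or.inr (Prod.mk_le_mk.2 ⟨by omega, by omega⟩)
  · intro C'' hsub'' hch'' hss
    apply Set.Subset.antisymm _ hss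
    intro x hx
    rcases eq_or_ne x ((a : ℕ), (b + 1 : ℕ)) with rfl | hne
    · exact Set.mem_insert _ _
    have hxP := hsub'' hx
    rcases hch''.total hx (hss (Set.mem_insert_of_mem _ htopC')) with h | h
    · have hD : {y ∈ C'' | y ≤ ((a : ℕ), b)} = C' := by
        apply hmax
        · rintro y ⟨hy, hy2⟩
          have := hsub'' hy
          obtain ⟨l, m⟩ := y
          obtain ⟨e1, e2⟩ := Prod.mk_le_mk.1 hy2
          simp only [Pkn, Set.mem_setOf_eq] at this ⊢
          omega
        · exact hch''.mono (Set.sep_subset _ _)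
        · intro c hc
          refine ⟨hss (Set.mem_insert_of_mem _ hc), ?_⟩
          have := hsub hc
          obtain ⟨l, m⟩ := c
          simp only [Pkn, Set.mem_setOf_eq] at this
          exact Prod.mk_le_mk.2 ⟨by omega, by omega⟩
      have hx' : x ∈ C' := by rw [← hD]; exact ⟨hx, h⟩
      exact Set.mem_insert_of_mem _ hx'
    · obtain ⟨l, m⟩ := x
      obtain ⟨e1, e2⟩ := Prod.mk_le_mk.1 h
      simp only [Pkn, Set.mem_setOf_eq] at hxP
      simp only [ne_eq, Prod.mk.injEq, not_and] at hne
      have hm : m = b := by omega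
      have hl : l = a := by omega
      subst hm; subst hl
      exact Set.mem_insert_of_mem _ htopC'

/- ## Recurrences -/

lemma recA (a b' : ℕ) (h : a + 1 < b') :
    {C : Set (ℕ × ℕ) | IsMaxChainIn (Pkn (a + 1) (b' + 1)) C}
      = insert ((a + 1 : ℕ), (b' + 1 : ℕ)) ''
        ({C : Set (ℕ × ℕ) | IsMaxChainIn (Pkn a (b' + 1)) C}
          ∪ {C : Set (ℕ × ℕ) | IsMaxChainIn (Pkn (a + 1) b') C}) := by
  apply Set.Subset.antisymm
  · intro C hC
    have hCmc : IsMaxChainIn (Pkn (a + 1) (b' + 1)) C := hC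
    have htop : ((a + 1 : ℕ), (b' + 1 : ℕ)) ∈ C := (mem_bot_top (by omega) hCmc).2
    have hCeq : C = insert ((a + 1 : ℕ), (b' + 1 : ℕ)) (C \ {((a + 1 : ℕ), (b' + 1 : ℕ))}) := by
      rw [Set.insert_diff_singleton]
      exact (Set.insert_eq_self.2 htop).symm
    rcases penult (by omega) (by omega) hCmc with ⟨hmem, hgr⟩ | ⟨hmem, hgr⟩
    · have hrem := removeA (a := a + 1) (b := b' + 1) (by omega) (by omega) hCmc hgr
      simp only [Nat.add_sub_cancel] at hrem
      exact ⟨_, Or.inl hrem, hCeq.symm⟩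
    · have hrem := removeB (a := a + 1) (b := b' + 1) (by omega) hCmc hgr
      simp only [Nat.add_sub_cancel] at hrem
      exact ⟨_, Or.inr hrem, hCeq.symm⟩
  · rintro _ ⟨C', hC', rfl⟩
    rcases hC' with hC' | hC'
    · exact extendA (by omega) hC'
    · exact extendB (by omega) hC'

lemma recB (a : ℕ) :
    {C : Set (ℕ × ℕ) | IsMaxChainIn (Pkn (a + 1) (a + 2)) C}
      = insert ((a + 1 : ℕ), (a + 2 : ℕ)) ''
        {C : Set (ℕ × ℕ) | IsMaxChainIn (Pkn a (a + 2)) C} := by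
  apply Set.Subset.antisymm
  · intro C hC
    have hCmc : IsMaxChainIn (Pkn (a + 1) (a + 2)) C := hC
    have htop : ((a + 1 : ℕ), (a + 2 : ℕ)) ∈ C := (mem_bot_top (by omega) hCmc).2
    have hCeq : C = insert ((a + 1 : ℕ), (a + 2 : ℕ)) (C \ {((a + 1 : ℕ), (a + 2 : ℕ))}) := by
      rw [Set.insert_diff_singleton]
      exact (Set.insert_eq_self.2 htop).symm
    rcases penult (by omega) (by omega) hCmc with ⟨hmem, hgr⟩ | ⟨hmem, hgr⟩
    · have hrem := removeA (a := a + 1) (b := a + 2) (by omega) (by omega) hCmc hgr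
      simp only [Nat.add_sub_cancel] at hrem
      exact ⟨_, hrem, hCeq.symm⟩
    · exfalso
      have := hCmc.1 hmem
      simp only [Pkn, Set.mem_setOf_eq] at this
      omega
  · rintro _ ⟨C', hC', rfl⟩
    exact extendA (by omega) hC'

lemma MC_base (b : ℕ) :
    {C : Set (ℕ × ℕ) | IsMaxChainIn (Pkn 0 b) C} = {Pkn 0 b} := by
  have hchain : IsChain (· ≤ ·) (Pkn 0 b) := by
    rintro ⟨l, m⟩ h1 ⟨l', m'⟩ h2 hne
    simp only [Pkn, Set.mem_setOf_eq] at h1 h2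
    rcases le_total m m' with h | h
    · exact Or.inl (Prod.mk_le_mk.2 ⟨by omega, h⟩)
    · exact Or.inr (Prod.mk_le_mk.2 ⟨by omega, h⟩)
  apply Set.Subset.antisymm
  · intro C hC
    obtain ⟨hsub, hch, hmax⟩ := hC
    have := hmax (Pkn 0 b) subset_rfl hchain hsub
    simp only [Set.mem_singleton_iff]
    exact this.symm
  · intro C hC
    simp only [Set.mem_singleton_iff] at hC
    subst hC
    exact ⟨subset_rfl, hchain, fun C' hsub' _ hss => Set.Subset.antisymm hsub' hss⟩

/- ## Counting -/

lemma top_notmem_A {a b : ℕ} {C : Set (ℕ × ℕ)} (hC : IsMaxChainIn (Pkn a b) C)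
    {p : ℕ × ℕ} (hp : a < p.1) : p ∉ C := by
  intro h
  have := hC.1 h
  simp only [Pkn, Set.mem_setOf_eq] at this
  omega

lemma top_notmem_B {a b : ℕ} {C : Set (ℕ × ℕ)} (hC : IsMaxChainIn (Pkn a b) C)
    {p : ℕ × ℕ} (hp : b < p.2) : p ∉ C := by
  intro h
  have := hC.1 h
  simp only [Pkn, Set.mem_setOf_eq] at this
  omega

lemma MC_ncard : ∀ s a b, a + b ≤ s → a < b →
    {C : Set (ℕ × ℕ) | IsMaxChainIn (Pkn a b) C}.ncard = bal a (b - 1) := by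
  intro s
  induction s with
  | zero => intro a b h hab; omega
  | succ s IH =>
    intro a b hfuel hab
    cases a with
    | zero => rw [MC_base, Set.ncard_singleton, bal_zero]
    | succ a =>
      obtain ⟨b'', rfl⟩ : ∃ b'', b = b'' + 1 := ⟨b - 1, by omega⟩
      have hb : a + 1 ≤ b'' := by omega
      rcases eq_or_lt_of_le hb with hdiag | hoff
      · subst hdiag
        have hinj : Set.InjOn (insert ((a + 1 : ℕ), (a + 2 : ℕ)))
            {C : Set (ℕ × ℕ) | IsMaxChainIn (Pkn a (a + 2)) C} := by
          intro C1 h1 C2 h2 heq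
          have n1 : ((a + 1 : ℕ), (a + 2 : ℕ)) ∉ C1 :=
            top_notmem_A h1 (show a < a + 1 by omega)
          have n2 : ((a + 1 : ℕ), (a + 2 : ℕ)) ∉ C2 :=
            top_notmem_A h2 (show a < a + 1 by omega)
          rw [← Set.insert_diff_self_of_notMem n1, ← Set.insert_diff_self_of_notMem n2, heq]
        rw [show a + 1 + 1 = a + 2 from rfl, recB a, Set.ncard_image_of_injOn hinj,
          IH a (a + 2) (by omega) (by omega), show a + 2 - 1 = a + 1 from rfl,
          bal_succ (le_refl a), bal_high (show a < a + 1 by omega)]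
        omega
      · have hdisj : Disjoint {C : Set (ℕ × ℕ) | IsMaxChainIn (Pkn a (b'' + 1)) C}
            {C : Set (ℕ × ℕ) | IsMaxChainIn (Pkn (a + 1) b'') C} := by
          rw [Set.disjoint_left]
          intro C hC1 hC2
          have htop : ((a : ℕ), (b'' + 1 : ℕ)) ∈ C := (mem_bot_top (by omega) hC1).2
          exact top_notmem_B hC2 (show b'' < b'' + 1 by omega) htop
        have hinj : Set.InjOn (insert ((a + 1 : ℕ), (b'' + 1 : ℕ)))
            ({C : Set (ℕ × ℕ) | IsMaxChainIn (Pkn a (b'' + 1)) C}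
              ∪ {C : Set (ℕ × ℕ) | IsMaxChainIn (Pkn (a + 1) b'') C}) := by
          intro C1 h1 C2 h2 heq
          have n1 : ((a + 1 : ℕ), (b'' + 1 : ℕ)) ∉ C1 := by
            rcases h1 with h1 | h1
            · exact top_notmem_A h1 (show a < a + 1 by omega)
            · exact top_notmem_B h1 (show b'' < b'' + 1 by omega)
          have n2 : ((a + 1 : ℕ), (b'' + 1 : ℕ)) ∉ C2 := by
            rcases h2 with h2 | h2
            · exact top_notmem_A h2 (show a < a + 1 by omega)
            · exact top_notmem_B h2 (show b'' < b'' + 1 by omega)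
          rw [← Set.insert_diff_self_of_notMem n1, ← Set.insert_diff_self_of_notMem n2, heq]
        obtain ⟨b3, rfl⟩ : ∃ b3, b'' = b3 + 1 := ⟨b'' - 1, by omega⟩
        rw [recA a (b3 + 1) hoff, Set.ncard_image_of_injOn hinj,
          Set.ncard_union_eq hdisj (MC_finite _ _) (MC_finite _ _),
          IH a (b3 + 1 + 1) (by omega) (by omega), IH (a + 1) (b3 + 1) (by omega) (by omega),
          show b3 + 1 + 1 - 1 = b3 + 1 from rfl, show b3 + 1 - 1 = b3 from rfl,
          bal_succ (show a ≤ b3 by omega)]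

end PknAux

/-- For `0 < k < n`, the number `d` of maximal chains of `P_{k,n}` satisfies
`n ⬝ d = (n - k) ⬝ C(n+k-1, k)` (the ballot number counting monotone lattice
paths from `(0,0)` to `(k,n-1)` staying weakly below the diagonal). -/
theorem Pkn_card_maxChains (k n : ℕ) (hk : 0 < k) (hkn : k < n) :
    n * {C : Set (ℕ × ℕ) | IsMaxChainIn (Pkn k n) C}.ncard
      = (n - k) * Nat.choose (n + k - 1) k := by
  rw [PknAux.MC_ncard (k + n) k n le_rfl hkn]
  have h1 := PknAux.bal_eq (k + (n - 1)) k (n - 1) le_rfl hk (by omega)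
  have e2 : k + (n - 1) = n + k - 1 := by omega
  rw [e2] at h1
  have h2 := Nat.choose_succ_right_eq (n + k - 1) (k - 1)
  rw [Nat.sub_add_cancel hk] at h2
  have e : n + k - 1 - (k - 1) = n := by omega
  rw [e] at h2
  set c1 := (n + k - 1).choose (k - 1) with hc1
  set c2 := (n + k - 1).choose k with hc2
  have h3 : n * PknAux.bal k (n - 1) + n * c1 = n * c2 := by
    rw [← Nat.mul_add, h1]
  have h4 : n * PknAux.bal k (n - 1) = n * c2 - n * c1 := Nat.eq_sub_of_add_eq h3
  have h5 : n * c1 = k * c2 := by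
    rw [mul_comm n c1, ← h2, mul_comm]
  rw [h4, h5, ← Nat.sub_mul]
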